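/- arXiv:math/9702205 — 3 statements merged into one kernel-verified Lean document; each statement's English description precedes it below -/
import Mathlib

section
/- Let κ be an infinite cardinal and λ a cardinal with λ ≥ 2. If Γ ⊆ (κ, κ⁺) is a club subset of κ⁺ and the principle □_{κ,<λ}(Γ) holds, then the full principle □_{κ,<λ} (that is, □_{κ,<λ}((κ,κ⁺))) holds. -/
open Cardinal Set

/-- `C` is a club subset of `ν`: `C ⊆ ν`, `C` is unbounded in `ν`, and `C` is closed
under suprema of its nonempty bounded subsets. -/
def IsClubIn (C : Set Ordinal.{0}) (ν : Ordinal.{0}) : Prop :=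
  C ⊆ Set.Iio ν ∧ (∀ α < ν, ∃ β ∈ C, α ≤ β) ∧
    ∀ s ⊆ C, s.Nonempty → sSup s < ν → sSup s ∈ C

/-- `ξ` is a limit point of the set of ordinals `C`: `ξ = sup (C ∩ ξ) > 0`. -/
def IsLimitPt (C : Set Ordinal.{0}) (ξ : Ordinal.{0}) : Prop :=
  0 < ξ ∧ ξ = sSup (C ∩ Set.Iio ξ)

/-- The order type of a set of ordinals. -/
noncomputable def otype (C : Set Ordinal.{0}) : Ordinal.{1} :=
  Ordinal.type (α := C) (· < ·)

/-- `lim(Γ)`: the limit points of `Γ` lying in the interval `(κ, κ⁺)`. -/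
def sqLim (κ : Cardinal.{0}) (Γ : Set Ordinal.{0}) : Set Ordinal.{0} :=
  {ν | κ.ord < ν ∧ ν < (Order.succ κ).ord ∧ IsLimitPt Γ ν}

/-- `F` is a witnessing sequence for `□_{κ,<λ}(Γ)`. -/
def IsSquareSeq (κ lam : Cardinal.{0}) (Γ : Set Ordinal.{0})
    (F : Ordinal.{0} → Set (Set Ordinal.{0})) : Prop :=
  ∀ ν ∈ sqLim κ Γ,
    (1 ≤ #(F ν) ∧ #(F ν) < Cardinal.lift.{1} lam) ∧
    ∀ C ∈ F ν,
      C ⊆ Set.Iio ν ∩ Γ ∧ IsClubIn C ν ∧ otype C ≤ Ordinal.lift.{1} κ.ord ∧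
      ∀ ν' < ν, IsLimitPt C ν' → C ∩ Set.Iio ν' ∈ F ν'

/-- The principle `□_{κ,<λ}(Γ)`. -/
def SquareLt (κ lam : Cardinal.{0}) (Γ : Set Ordinal.{0}) : Prop :=
  ∃ F, IsSquareSeq κ lam Γ F

/-- If `κ` is infinite, `λ ≥ 2`, `Γ ⊆ (κ, κ⁺)` is club in `κ⁺`, and
`□_{κ,<λ}(Γ)` holds, then the full principle `□_{κ,<λ} = □_{κ,<λ}((κ,κ⁺))` holds. -/
theorem square_of_club (κ lam : Cardinal.{0}) (hκ : ℵ₀ ≤ κ) (hlam : 2 ≤ lam)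
    (Γ : Set Ordinal.{0}) (hsub : Γ ⊆ Set.Ioo κ.ord (Order.succ κ).ord)
    (hclub : IsClubIn Γ (Order.succ κ).ord)
    (h : SquareLt κ lam Γ) :
    SquareLt κ lam (Set.Ioo κ.ord (Order.succ κ).ord) := by
  classical
  obtain ⟨F, hF⟩ := h
  set sc : Ordinal.{0} := (Order.succ κ).ord with hscdef
  have hκsc : κ.ord < sc := Cardinal.ord_lt_ord.2 (Order.lt_succ κ)
  have hκ' : ℵ₀ ≤ Order.succ κ := hκ.trans (Order.le_succ κ)
  have hsclim : Order.IsSuccLimit sc := Cardinal.isSuccLimit_ord hκ'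
  have hreg : (Order.succ κ).IsRegular := Cardinal.isRegular_succ hκ
  have hcof : sc.cof = Order.succ κ := hreg.cof_eq
  have hκpos : (0 : Ordinal) < κ.ord := by
    rw [Cardinal.lt_ord]; simpa using (aleph0_pos.trans_le hκ)
  set c : Ordinal.{0} := κ.ord + 1 with hcdef
  have hcsc : c < sc := hsclim.succ_lt hκsc
  set Γ' : Set Ordinal.{0} := Γ ∪ Set.Ici sc with hΓ'def
  have hunb : ¬ BddAbove Γ' := by
    rintro ⟨b, hb⟩
    have h1 : max sc (b + 1) ∈ Γ' := Or.inr (Set.mem_Ici.2 (le_max_left _ _))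
    have := hb h1
    exact absurd ((le_max_right sc (b+1)).trans this) (by simp)
  have hclosed : IsClosed Γ' := by
    rw [Ordinal.isClosed_iff_iSup]
    intro ι hι f hf
    rcases le_or_gt sc (⨆ i, f i) with hge | hlt
    · exact Or.inr hge
    · have hfΓ : ∀ i, f i ∈ Γ := by
        intro i
        rcases hf i with hi | hi
        · exact hi
        · exact absurd ((Ordinal.le_iSup f i).trans_lt hlt) (not_lt.2 hi)
      have hne : (Set.range f).Nonempty := Set.range_nonempty f
      have : sSup (Set.range f) ∈ Γ := by
        apply hclub.2.2 _ (Set.range_subset_iff.2 hfΓ) hne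
        rwa [sSup_range]
      rw [sSup_range] at this
      exact Or.inl this
  set e : Ordinal.{0} → Ordinal.{0} := Ordinal.enumOrd Γ' with hedef
  have hnorm : Order.IsNormal e :=
    (Ordinal.enumOrd_isNormal_iff_isClosed hunb).2 hclosed
  -- the enumeration of Γ' stays below κ⁺ on indices below κ⁺
  have hkey : ∀ δ < sc, e δ < sc := by
    intro δ
    induction δ using Ordinal.induction with
    | _ δ IH =>
      intro hδ
      rcases Ordinal.zero_or_succ_or_isSuccLimit δ with rfl | ⟨u, rfl⟩ | hlim
      · obtain ⟨β, hβΓ, -⟩ := hclub.2.1 0 hsclim.pos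
        have : e 0 ≤ β := by
          rw [hedef, Ordinal.enumOrd_zero]
          exact csInf_le' (Or.inl hβΓ)
        exact this.trans_lt (hsub hβΓ).2
      · have hu : u < sc := (Order.lt_succ u).trans hδ
        have heu : e u < sc := IH u (Order.lt_succ u) hu
        have hα : e u + 1 < sc := hsclim.succ_lt heu
        obtain ⟨β, hβΓ, hβge⟩ := hclub.2.1 (e u + 1) hα
        have heuβ : e u < β := lt_of_lt_of_le (lt_add_one _) hβge
        have : e (Order.succ u) ≤ β :=
          Ordinal.enumOrd_succ_le hunb (Or.inl hβΓ) heuβ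
        exact this.trans_lt (hsub hβΓ).2
      · rw [← Ordinal.IsNormal.bsup_eq hnorm hlim]
        apply Ordinal.bsup_lt_ord
        · rw [hcof]
          exact Cardinal.lt_ord.1 hδ
        · intro i hi
          exact IH i hi (hi.trans hδ)
  set g : Ordinal.{0} → Ordinal.{0} := fun ν => e (ν - c) with hgdef
  -- basic facts about `g`
  have hgΓ : ∀ ν ∈ Set.Ioo κ.ord sc, g ν ∈ Γ := by
    rintro ν ⟨-, hν2⟩
    have h1 : ν - c ≤ ν := Ordinal.sub_le_self ν c
    have h2 : e (ν - c) < sc := hkey _ (h1.trans_lt hν2)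
    have h3 : e (ν - c) ∈ Γ' := Ordinal.enumOrd_mem hunb _
    rcases h3 with h3 | h3
    · exact h3
    · exact absurd h2 (not_lt.2 h3)
  have hcle : ∀ {x : Ordinal}, κ.ord < x → c ≤ x := by
    intro x hx
    rw [hcdef]
    exact Order.add_one_le_iff.2 hx
  have hgmono : ∀ {x y : Ordinal}, κ.ord < x → x < y → g x < g y := by
    intro x y hx hxy
    apply hnorm.strictMono
    rw [Ordinal.sub_lt_of_le (hcle hx), Ordinal.add_sub_cancel_of_le (hcle (hx.trans hxy))]
    exact hxy
  have hglt : ∀ {x y : Ordinal}, κ.ord < x → κ.ord < y → (g x < g y ↔ x < y) := by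
    intro x y hx hy
    constructor
    · intro hg
      by_contra hxy
      rcases (not_lt.1 hxy).lt_or_eq with h' | h'
      · exact absurd (hgmono hy h') (not_lt.2 hg.le)
      · exact absurd h' (by rintro rfl; exact lt_irrefl _ hg)
    · exact hgmono hx
  have hsurj : ∀ γ ∈ Γ, ∃ ν ∈ Set.Ioo κ.ord sc, g ν = γ := by
    intro γ hγ
    obtain ⟨δ, hδ⟩ := Ordinal.enumOrd_surjective hunb (Or.inl hγ : γ ∈ Γ')
    rw [← hedef] at hδ
    have hδsc : δ < sc := by
      by_contra hδsc
      have h2 : sc ≤ e δ := (not_lt.1 hδsc).trans (Ordinal.le_enumOrd_self hunb)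
      rw [hδ] at h2
      exact absurd (hsub hγ).2 (not_lt.2 h2)
    refine ⟨c + δ, ⟨?_, ?_⟩, ?_⟩
    · calc κ.ord < c := lt_add_one _
        _ ≤ c + δ := le_self_add
    · rw [Cardinal.lt_ord] at hcsc hδsc ⊢
      rw [Ordinal.card_add]
      exact Cardinal.add_lt_of_lt hκ' hcsc hδsc
    · rw [hgdef]
      simp only [Ordinal.add_sub_cancel]
      exact hδ
  -- continuity of `g`
  have hcont : ∀ s : Set Ordinal.{0}, s ⊆ Set.Ioi κ.ord → s.Nonempty → BddAbove s →
      g (sSup s) = sSup (g '' s) := by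
    intro s hs hne hbdd
    set T : Set Ordinal.{0} := (fun x => x - c) '' s with hTdef
    have hTne : T.Nonempty := hne.image _
    have hTbdd : BddAbove T := by
      obtain ⟨b, hb⟩ := hbdd
      exact ⟨b, by rintro _ ⟨x, hx, rfl⟩; exact (Ordinal.sub_le_self x c).trans (hb hx)⟩
    have himg : (fun x => c + x) '' T = s := by
      rw [hTdef, ← Set.image_comp]
      apply Set.eq_of_subset_of_subset
      · rintro _ ⟨x, hx, rfl⟩
        simpa [Function.comp, Ordinal.add_sub_cancel_of_le (hcle (hs hx))] using hx
      · intro x hx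
        exact ⟨x, hx, by simp [Function.comp, Ordinal.add_sub_cancel_of_le (hcle (hs hx))]⟩
    have h1 : c + sSup T = sSup s := by
      rw [(Ordinal.isNormal_add_right c).map_sSup hTne hTbdd, himg]
    have h2 : sSup s - c = sSup T := by
      rw [← h1, Ordinal.add_sub_cancel]
    have h3 : e '' T = g '' s := by
      rw [hTdef, ← Set.image_comp]
      rfl
    rw [hgdef]
    simp only
    rw [h2, hnorm.map_sSup hTne hTbdd, h3]
  -- the transferred sequence
  set φ : Set Ordinal.{0} → Set Ordinal.{0} :=
    fun C => {x | x ∈ Set.Ioo κ.ord sc ∧ g x ∈ C} with hφdef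
  have hφg : ∀ C ⊆ Γ, g '' (φ C) = C := by
    intro C hC
    apply Set.eq_of_subset_of_subset
    · rintro _ ⟨x, hx, rfl⟩
      exact hx.2
    · intro γ hγ
      obtain ⟨x, hx, rfl⟩ := hsurj γ (hC hγ)
      exact ⟨x, ⟨hx, hγ⟩, rfl⟩
  refine ⟨fun ν => φ '' (F (g ν)), ?_⟩
  intro ν hν
  obtain ⟨hν1, hν2, hν0, hνsup⟩ := hν
  have hνIoo : ν ∈ Set.Ioo κ.ord sc := ⟨hν1, hν2⟩
  set S : Set Ordinal.{0} := Set.Ioo κ.ord sc ∩ Set.Iio ν with hSdef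
  have hSne : S.Nonempty := by
    by_contra hS
    rw [Set.not_nonempty_iff_eq_empty] at hS
    rw [hS, csSup_empty] at hνsup
    exact absurd hνsup (by simpa using (ne_of_gt hν0))
  have hSsub : S ⊆ Set.Ioi κ.ord := fun x hx => hx.1.1
  have hSbdd : BddAbove S := ⟨ν, fun x hx => le_of_lt hx.2⟩
  have hgνsup : g ν = sSup (g '' S) := by
    conv_lhs => rw [hνsup]
    exact hcont S hSsub hSne hSbdd
  have hgSsub : g '' S ⊆ Γ ∩ Set.Iio (g ν) := by
    rintro _ ⟨x, hx, rfl⟩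
    exact ⟨hgΓ x hx.1, hgmono hx.1.1 hx.2⟩
  have hgνΓ : g ν ∈ Γ := hgΓ ν hνIoo
  have hgνlim : g ν ∈ sqLim κ Γ := by
    refine ⟨(hsub hgνΓ).1, (hsub hgνΓ).2, hκpos.trans (hsub hgνΓ).1, ?_⟩
    apply le_antisymm
    · calc g ν = sSup (g '' S) := hgνsup
        _ ≤ sSup (Γ ∩ Set.Iio (g ν)) :=
          csSup_le_csSup ⟨g ν, fun x hx => le_of_lt hx.2⟩ (hSne.image g) hgSsub
    · exact csSup_le ((hSne.image g).mono hgSsub) (fun b hb => le_of_lt hb.2)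
  obtain ⟨⟨hcard1, hcard2⟩, hmem⟩ := hF (g ν) hgνlim
  have hφinj : Set.InjOn φ (F (g ν)) := by
    intro C1 h1 C2 h2 heq
    have e1 := hφg C1 (fun x hx => ((hmem C1 h1).1 hx).2)
    have e2 := hφg C2 (fun x hx => ((hmem C2 h2).1 hx).2)
    rw [← e1, ← e2, heq]
  have hcardeq : #(φ '' (F (g ν))) = #(F (g ν)) :=
    Cardinal.mk_image_eq_of_injOn φ _ hφinj
  constructor
  · rw [hcardeq]
    exact ⟨hcard1, hcard2⟩
  rintro D ⟨C, hC, rfl⟩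
  obtain ⟨hCsub, hCclub, hCtype, hCcoh⟩ := hmem C hC
  -- D ⊆ Iio ν ∩ Ioo
  have hDsub : φ C ⊆ Set.Iio ν ∩ Set.Ioo κ.ord sc := by
    rintro x ⟨hxIoo, hxC⟩
    refine ⟨?_, hxIoo⟩
    have : g x < g ν := (hCsub hxC).1
    exact (hglt hxIoo.1 hν1).1 this
  refine ⟨hDsub, ⟨fun x hx => (hDsub hx).1, ?_, ?_⟩, ?_, ?_⟩
  -- unbounded
  · intro α hα
    rcases le_or_gt α κ.ord with hακ | hκα
    · obtain ⟨β, hβC, -⟩ := hCclub.2.1 0 (hκpos.trans (hsub hgνΓ).1)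
      obtain ⟨x, hxIoo, hgx⟩ := hsurj β ((hCsub hβC).2)
      exact ⟨x, ⟨hxIoo, hgx ▸ hβC⟩, hακ.trans (le_of_lt hxIoo.1)⟩
    · obtain ⟨β, hβC, hβge⟩ := hCclub.2.1 (g α) (hgmono hκα hα)
      obtain ⟨x, hxIoo, hgx⟩ := hsurj β ((hCsub hβC).2)
      refine ⟨x, ⟨hxIoo, hgx ▸ hβC⟩, ?_⟩
      by_contra hxα
      have : g x < g α := hgmono hxIoo.1 (lt_of_not_ge hxα)
      rw [hgx] at this
      exact absurd hβge (not_le.2 this)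
  -- closed
  · intro s hs hsne hslt
    have hssub : s ⊆ Set.Ioi κ.ord := fun x hx => (hs hx).1.1
    have hsbdd : BddAbove s := ⟨ν, fun x hx => le_of_lt ((hDsub (hs hx)).1)⟩
    have hsupκ : κ.ord < sSup s := by
      obtain ⟨x, hx⟩ := hsne
      exact lt_of_lt_of_le (hssub hx) (le_csSup hsbdd hx)
    have hgsup : g (sSup s) = sSup (g '' s) := hcont s hssub hsne hsbdd
    have hgssub : g '' s ⊆ C := by
      rintro _ ⟨x, hx, rfl⟩
      exact (hs hx).2
    have hsupC : sSup (g '' s) ∈ C := by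
      apply hCclub.2.2 _ hgssub (hsne.image g)
      rw [← hgsup]
      exact hgmono hsupκ hslt
    refine ⟨⟨hsupκ, hslt.trans hν2⟩, ?_⟩
    rw [hgsup]
    exact hsupC
  -- order type
  · have hiso : otype (φ C) = otype C := by
      have hbij : Function.Bijective (fun x : φ C => (⟨g x, x.2.2⟩ : C)) := by
        constructor
        · rintro ⟨x, hx⟩ ⟨y, hy⟩ hxy
          simp only [Subtype.mk_eq_mk] at hxy ⊢
          by_contra hne
          rcases lt_or_gt_of_ne hne with h' | h'
          · exact absurd hxy (ne_of_lt (hgmono hx.1.1 h'))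
          · exact absurd hxy.symm (ne_of_lt (hgmono hy.1.1 h'))
        · rintro ⟨γ, hγ⟩
          obtain ⟨x, hxIoo, hgx⟩ := hsurj γ ((hCsub hγ).2)
          exact ⟨⟨x, hxIoo, hgx ▸ hγ⟩, Subtype.ext hgx⟩
      refine Ordinal.type_eq.2 ⟨RelIso.mk (Equiv.ofBijective _ hbij) ?_⟩
      rintro ⟨x, hx⟩ ⟨y, hy⟩
      simp only [Equiv.ofBijective_apply, Subtype.mk_lt_mk]
      exact hglt hx.1.1 hy.1.1
    rw [hiso]
    exact hCtype
  -- coherence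
  · intro ν' hν'ν hlp
    obtain ⟨hν'0, hν'sup⟩ := hlp
    set s : Set Ordinal.{0} := φ C ∩ Set.Iio ν' with hsdef
    have hsne : s.Nonempty := by
      by_contra hs
      rw [Set.not_nonempty_iff_eq_empty] at hs
      rw [hs, csSup_empty] at hν'sup
      exact absurd hν'sup (by simpa using (ne_of_gt hν'0))
    have hssub : s ⊆ Set.Ioi κ.ord := fun x hx => hx.1.1.1
    have hsbdd : BddAbove s := ⟨ν', fun x hx => le_of_lt hx.2⟩
    have hν'κ : κ.ord < ν' := by
      obtain ⟨x, hx⟩ := hsne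
      rw [hν'sup]
      exact lt_of_lt_of_le (hssub hx) (le_csSup hsbdd hx)
    have hgν'sup : g ν' = sSup (g '' s) := by
      conv_lhs => rw [hν'sup]
      exact hcont s hssub hsne hsbdd
    have hgssub : g '' s ⊆ C ∩ Set.Iio (g ν') := by
      rintro _ ⟨x, hx, rfl⟩
      exact ⟨hx.1.2, hgmono hx.1.1.1 hx.2⟩
    have hν'Ioo : ν' ∈ Set.Ioo κ.ord sc := ⟨hν'κ, hν'ν.trans hν2⟩
    have hglim : IsLimitPt C (g ν') := by
      refine ⟨hκpos.trans (hsub (hgΓ ν' hν'Ioo)).1, ?_⟩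
      apply le_antisymm
      · calc g ν' = sSup (g '' s) := hgν'sup
          _ ≤ sSup (C ∩ Set.Iio (g ν')) :=
            csSup_le_csSup ⟨g ν', fun x hx => le_of_lt hx.2⟩ (hsne.image g) hgssub
      · exact csSup_le ((hsne.image g).mono hgssub) (fun b hb => le_of_lt hb.2)
    have hCmem : C ∩ Set.Iio (g ν') ∈ F (g ν') :=
      hCcoh (g ν') (hgmono hν'κ hν'ν) hglim
    refine ⟨C ∩ Set.Iio (g ν'), hCmem, ?_⟩
    apply Set.eq_of_subset_of_subset
    · rintro x ⟨hxIoo, hxC, hxlt⟩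
      exact ⟨⟨hxIoo, hxC⟩, (hglt hxIoo.1 hν'κ).1 hxlt⟩
    · rintro x ⟨⟨hxIoo, hxC⟩, hxlt⟩
      exact ⟨hxIoo, hxC, hgmono hxIoo.1 hxlt⟩
end

section
/- Let (I, ν, S, b, g) be an abstract coherent club system and let C : I → Set(Ord) be its associated coherent union. Then for every i ∈ I and every limit point ν̄ of S(i) with ν̄ < ν(i), one has C(g(i, ν̄)) = ν̄ ∩ C(i). -/
open Cardinal Set

/-- An abstract coherent club system, abstracting the data provided by Lemma 1.19 of
the paper for the sets `S(M,ζ)`: indices `i`, limit ordinals `ν i`, clubs `S i ⊆ ν i`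
of order type at most `(b i)⁺`, and for each limit point `ν̄ < ν i` of `S i` an index
`g i ν̄` satisfying the coherence conditions (H3)–(H6). -/
structure CoherentClubSystem (I : Type) where
  nu : I → Ordinal.{0}
  S : I → Set Ordinal.{0}
  b : I → Cardinal.{0}
  g : I → Ordinal.{0} → I
  nu_isLimit : ∀ i, Order.IsSuccLimit (nu i)
  b_infinite : ∀ i, ℵ₀ ≤ b i
  H1 : ∀ i, IsClubIn (S i) (nu i)
  H2 : ∀ i, otype (S i) ≤ Ordinal.lift.{1} (Order.succ (b i)).ord
  H3 : ∀ i ν', IsLimitPt (S i) ν' → ν' < nu i → nu (g i ν') = ν'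
  H4 : ∀ i ν', IsLimitPt (S i) ν' → ν' < nu i → S i ∩ Set.Iio ν' ⊆ S (g i ν')
  H5 : ∀ i ν', IsLimitPt (S i) ν' → ν' < nu i → b (g i ν') = b i
  H6 : ∀ i ν' ν'', IsLimitPt (S i) ν' → IsLimitPt (S i) ν'' → ν' < ν'' → ν'' < nu i →
    g (g i ν'') ν' = g i ν'

/-- `C` is the coherent union associated to the system: for every index `i`,
`C i = S i ∪ ⋃ {C (g i ν̄) : ν̄ a limit point of S i below ν i}`. -/
def CoherentClubSystem.IsCoherentUnion {I : Type} (sys : CoherentClubSystem I)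
    (C : I → Set Ordinal.{0}) : Prop :=
  ∀ i, C i = sys.S i ∪
    ⋃ ν' ∈ {ν' | IsLimitPt (sys.S i) ν' ∧ ν' < sys.nu i}, C (sys.g i ν')

lemma CoherentClubSystem.limitPt_trans {I : Type} (sys : CoherentClubSystem I)
    {i : I} {ν' ν'' : Ordinal.{0}}
    (h' : IsLimitPt (sys.S i) ν') (h'' : IsLimitPt (sys.S i) ν'')
    (hlt : ν' < ν'') (hν'' : ν'' < sys.nu i) :
    IsLimitPt (sys.S (sys.g i ν'')) ν' := by
  obtain ⟨hpos, heq⟩ := h'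
  have hsub : sys.S i ∩ Set.Iio ν' ⊆ sys.S (sys.g i ν'') ∩ Set.Iio ν' := by
    rintro x ⟨hx1, hx2⟩
    exact ⟨sys.H4 i ν'' h'' hν'' ⟨hx1, lt_trans hx2 hlt⟩, hx2⟩
  have hne : (sys.S i ∩ Set.Iio ν').Nonempty := by
    by_contra h
    rw [Set.not_nonempty_iff_eq_empty] at h
    rw [h] at heq
    simp at heq
    exact absurd heq (ne_of_gt hpos)
  refine ⟨hpos, le_antisymm ?_ ?_⟩
  · calc ν' = sSup (sys.S i ∩ Set.Iio ν') := heq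
      _ ≤ sSup (sys.S (sys.g i ν'') ∩ Set.Iio ν') :=
        csSup_le_csSup ⟨ν', fun x hx => le_of_lt hx.2⟩ hne hsub
  · exact csSup_le' (fun x hx => le_of_lt hx.2)

/-- (Lemma 1.21(b)) The coherent union coheres at limit points of
`S i`: if `ν̄ < ν i` is a limit point of `S i`, then `C (g i ν̄) = ν̄ ∩ C i`. -/
theorem coherentUnion_coherence {I : Type} (sys : CoherentClubSystem I)
    (C : I → Set Ordinal.{0}) (hC : sys.IsCoherentUnion C) :
    ∀ i ν', IsLimitPt (sys.S i) ν' → ν' < sys.nu i →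
      C (sys.g i ν') = Set.Iio ν' ∩ C i := by
  have subC : ∀ o : Ordinal, ∀ i, sys.nu i = o → C i ⊆ Set.Iio o := by
    intro o
    induction o using Ordinal.induction with
    | _ o IH =>
      intro i hi
      rw [hC i]
      rintro x (hx | hx)
      · exact hi ▸ (sys.H1 i).1 hx
      · simp only [Set.mem_iUnion, Set.mem_setOf_eq] at hx
        obtain ⟨ν', ⟨hlim, hlt⟩, hx⟩ := hx
        have h3 := sys.H3 i ν' hlim hlt
        have := IH ν' (hi ▸ hlt) (sys.g i ν') h3 hx
        exact lt_trans this (hi ▸ hlt)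
  have main : ∀ o : Ordinal, ∀ i, sys.nu i = o → ∀ ν', IsLimitPt (sys.S i) ν' →
      ν' < sys.nu i → C (sys.g i ν') = Set.Iio ν' ∩ C i := by
    intro o
    induction o using Ordinal.induction with
    | _ o IH =>
      intro i hio ν' hlim hlt
      apply Set.Subset.antisymm
      · intro x hx
        refine ⟨subC ν' (sys.g i ν') (sys.H3 i ν' hlim hlt) hx, ?_⟩
        rw [hC i]
        right
        exact Set.mem_biUnion (show ν' ∈ {ν' | IsLimitPt (sys.S i) ν' ∧ ν' < sys.nu i}
          from ⟨hlim, hlt⟩) hx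
      · rintro x ⟨hxν, hxC⟩
        rw [hC i] at hxC
        rcases hxC with hxS | hxU
        · have : x ∈ sys.S (sys.g i ν') := sys.H4 i ν' hlim hlt ⟨hxS, hxν⟩
          rw [hC (sys.g i ν')]
          exact Or.inl this
        · simp only [Set.mem_iUnion, Set.mem_setOf_eq] at hxU
          obtain ⟨νb, ⟨hlimb, hltb⟩, hx⟩ := hxU
          rcases lt_trichotomy νb ν' with h | h | h
          · have hlim' : IsLimitPt (sys.S (sys.g i ν')) νb :=
              sys.limitPt_trans hlimb hlim h hlt
            have h6 := sys.H6 i νb ν' hlimb hlim h hlt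
            rw [hC (sys.g i ν')]
            right
            refine Set.mem_biUnion (show νb ∈ {ν'' | IsLimitPt (sys.S (sys.g i ν')) ν''
              ∧ ν'' < sys.nu (sys.g i ν')} from ⟨hlim', ?_⟩) ?_
            · rw [sys.H3 i ν' hlim hlt]; exact h
            · rw [h6]; exact hx
          · subst h; exact hx
          · have hb := sys.H3 i νb hlimb hltb
            have hlim' : IsLimitPt (sys.S (sys.g i νb)) ν' :=
              sys.limitPt_trans hlim hlimb h hltb
            have h6 := sys.H6 i ν' νb hlim hlimb h hltb
            have key := IH νb (hio ▸ hltb) (sys.g i νb) hb ν' hlim' (by rw [hb]; exact h)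
            rw [h6] at key
            rw [key]
            exact ⟨hxν, hx⟩
  exact fun i => main (sys.nu i) i rfl
end

section
/- Let (I, ν, S, b, g) be an abstract coherent club system and let C : I → Set(Ord) be its associated coherent union. Then for every i ∈ I and every limit point ξ of C(i) with ξ < ν(i), there exists j ∈ I such that ν(j) = ξ and C(j) = ξ ∩ C(i). -/
open Cardinal Set

section AuxCoherence

lemma limitPt_nonempty {C : Set Ordinal.{0}} {ξ : Ordinal.{0}} (h : IsLimitPt C ξ) :
    (C ∩ Set.Iio ξ).Nonempty := by
  by_contra hne
  rw [Set.not_nonempty_iff_eq_empty] at hne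
  have := h.2
  rw [hne, csSup_empty] at this
  exact absurd this (by simpa using h.1.ne')

lemma limitPt_bddAbove {C : Set Ordinal.{0}} {ξ : Ordinal.{0}} :
    BddAbove (C ∩ Set.Iio ξ) := ⟨ξ, fun x hx => hx.2.le⟩

lemma limitPt_exists_between {C : Set Ordinal.{0}} {ξ : Ordinal.{0}} (h : IsLimitPt C ξ)
    {α : Ordinal.{0}} (hα : α < ξ) : ∃ β ∈ C, α < β ∧ β < ξ := by
  have hα' : α < sSup (C ∩ Set.Iio ξ) := h.2 ▸ hα
  obtain ⟨β, hβ, hαβ⟩ := exists_lt_of_lt_csSup (limitPt_nonempty h) hα'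
  exact ⟨β, hβ.1, hαβ, hβ.2⟩

lemma isLimitPt_mono {C D : Set Ordinal.{0}} {ξ : Ordinal.{0}} (h : IsLimitPt C ξ)
    (hsub : C ∩ Set.Iio ξ ⊆ D) : IsLimitPt D ξ := by
  have hsub' : C ∩ Set.Iio ξ ⊆ D ∩ Set.Iio ξ := fun x hx => ⟨hsub hx, hx.2⟩
  refine ⟨h.1, le_antisymm ?_ (csSup_le ((limitPt_nonempty h).mono hsub')
    fun x hx => hx.2.le)⟩
  calc ξ = sSup (C ∩ Set.Iio ξ) := h.2
    _ ≤ sSup (D ∩ Set.Iio ξ) := csSup_le_csSup limitPt_bddAbove (limitPt_nonempty h) hsub'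

variable {I : Type} (sys : CoherentClubSystem I) (C : I → Set Ordinal.{0})
  (hC : sys.IsCoherentUnion C)

include hC

lemma coh_C_subset_Iio : ∀ i, C i ⊆ Set.Iio (sys.nu i) := by
  suffices h : ∀ o : Ordinal.{0}, ∀ i, sys.nu i = o → C i ⊆ Set.Iio o by
    intro i; exact h _ i rfl
  intro o
  induction o using Ordinal.induction with
  | h o IH =>
    rintro i rfl
    rw [hC i]
    rintro x (hx | hx)
    · exact (sys.H1 i).1 hx
    · simp only [Set.mem_iUnion, Set.mem_setOf_eq] at hx
      obtain ⟨ν', ⟨hlim, hlt⟩, hx⟩ := hx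
      exact lt_trans (IH ν' hlt (sys.g i ν') (sys.H3 i ν' hlim hlt) hx) hlt

lemma coh_Cg_subset (i : I) (ν' : Ordinal.{0}) (hlim : IsLimitPt (sys.S i) ν')
    (hlt : ν' < sys.nu i) : C (sys.g i ν') ⊆ C i := by
  rw [hC i]
  exact le_trans (Set.subset_biUnion_of_mem (u := fun ν' => C (sys.g i ν'))
    (show ν' ∈ {ν' | IsLimitPt (sys.S i) ν' ∧ ν' < sys.nu i} from ⟨hlim, hlt⟩))
    Set.subset_union_right

lemma coh_S_limitPt_g {i : I} {ν' ν'' : Ordinal.{0}} (h' : IsLimitPt (sys.S i) ν')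
    (h'' : IsLimitPt (sys.S i) ν'') (h12 : ν' < ν'') (hlt : ν'' < sys.nu i) :
    IsLimitPt (sys.S (sys.g i ν'')) ν' :=
  isLimitPt_mono h' (fun y hy => sys.H4 i ν'' h'' hlt ⟨hy.1, lt_trans hy.2 h12⟩)

lemma coh_main : ∀ i ν', IsLimitPt (sys.S i) ν' → ν' < sys.nu i →
    C (sys.g i ν') = Set.Iio ν' ∩ C i := by
  suffices h : ∀ o : Ordinal.{0}, ∀ i, sys.nu i = o → ∀ ν', IsLimitPt (sys.S i) ν' →
      ν' < sys.nu i → C (sys.g i ν') = Set.Iio ν' ∩ C i by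
    intro i; exact h _ i rfl
  intro o
  induction o using Ordinal.induction with
  | h o IH =>
    rintro i rfl ν' hlim hlt
    have hnug : sys.nu (sys.g i ν') = ν' := sys.H3 i ν' hlim hlt
    apply Set.Subset.antisymm
    · intro x hx
      refine ⟨?_, coh_Cg_subset sys C hC i ν' hlim hlt hx⟩
      have := coh_C_subset_Iio sys C hC (sys.g i ν') hx
      rwa [hnug] at this
    · rw [hC i]
      rintro x ⟨hxν, (hx | hx)⟩
      · have hmem := sys.H4 i ν' hlim hlt ⟨hx, hxν⟩
        rw [hC (sys.g i ν')]
        exact Or.inl hmem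
      · simp only [Set.mem_iUnion, Set.mem_setOf_eq] at hx
        obtain ⟨ν'', ⟨hlim'', hlt''⟩, hx⟩ := hx
        rcases lt_trichotomy ν'' ν' with h1 | rfl | h1
        · have hlimg : IsLimitPt (sys.S (sys.g i ν')) ν'' :=
            coh_S_limitPt_g sys C hC hlim'' hlim h1 hlt
          have hg := sys.H6 i ν'' ν' hlim'' hlim h1 hlt
          rw [← hg] at hx
          exact coh_Cg_subset sys C hC (sys.g i ν') ν'' hlimg
            (by rw [hnug]; exact h1) hx
        · exact hx
        · have hnug'' : sys.nu (sys.g i ν'') = ν'' := sys.H3 i ν'' hlim'' hlt''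
          have hlimg : IsLimitPt (sys.S (sys.g i ν'')) ν' :=
            coh_S_limitPt_g sys C hC hlim hlim'' h1 hlt''
          have hIH := IH ν'' hlt'' (sys.g i ν'') hnug'' ν' hlimg (by rw [hnug'']; exact h1)
          rw [sys.H6 i ν' ν'' hlim hlim'' h1 hlt''] at hIH
          rw [hIH]
          exact ⟨hxν, hx⟩

end AuxCoherence

/-- (Lemma 1.21(c)) The coherent union coheres at every limit point:
if `ξ < ν i` is a limit point of `C i`, then there is an index `j` with `ν j = ξ`
and `C j = ξ ∩ C i`. -/
theorem coherentUnion_full_coherence {I : Type} (sys : CoherentClubSystem I)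
    (C : I → Set Ordinal.{0}) (hC : sys.IsCoherentUnion C) :
    ∀ i ξ, IsLimitPt (C i) ξ → ξ < sys.nu i →
      ∃ j, sys.nu j = ξ ∧ C j = Set.Iio ξ ∩ C i := by
  suffices h : ∀ o : Ordinal.{0}, ∀ i, sys.nu i = o → ∀ ξ, IsLimitPt (C i) ξ →
      ξ < sys.nu i → ∃ j, sys.nu j = ξ ∧ C j = Set.Iio ξ ∩ C i by
    intro i; exact h _ i rfl
  intro o
  induction o using Ordinal.induction with
  | h o IH =>
    rintro i rfl ξ hξ hlt
    by_cases hS : IsLimitPt (sys.S i) ξ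
    · exact ⟨sys.g i ξ, sys.H3 i ξ hS hlt, coh_main sys C hC i ξ hS hlt⟩
    · set σ := sSup (sys.S i ∩ Set.Iio ξ) with hσdef
      have hσlt : σ < ξ := by
        rcases Set.eq_empty_or_nonempty (sys.S i ∩ Set.Iio ξ) with he | hne
        · rw [hσdef, he, csSup_empty]
          simpa using hξ.1
        · have hle : σ ≤ ξ := csSup_le hne fun x hx => hx.2.le
          rcases hle.lt_or_eq with h | h
          · exact h
          · exact absurd ⟨hξ.1, h.symm⟩ hS
      obtain ⟨α, hαC, hσα, hαξ⟩ := limitPt_exists_between hξ hσlt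
      have hαS : α ∉ sys.S i := fun hmem =>
        absurd (le_csSup limitPt_bddAbove ⟨hmem, hαξ⟩) (not_le.mpr hσα)
      rw [hC i] at hαC
      rcases hαC with h | h
      · exact absurd h hαS
      · simp only [Set.mem_iUnion, Set.mem_setOf_eq] at h
        obtain ⟨ν'', ⟨hlim'', hlt''⟩, hα⟩ := h
        have hnug : sys.nu (sys.g i ν'') = ν'' := sys.H3 i ν'' hlim'' hlt''
        have hαν : α < ν'' := by
          have := coh_C_subset_Iio sys C hC (sys.g i ν'') hα
          rwa [hnug] at this
        have hξν : ξ < ν'' := by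
          rcases lt_trichotomy ξ ν'' with h1 | h1 | h1
          · exact h1
          · exact absurd (h1 ▸ hlim'') hS
          · have hle : ν'' ≤ σ := by
              rw [hlim''.2]
              exact csSup_le_csSup limitPt_bddAbove (limitPt_nonempty hlim'')
                (fun y hy => ⟨hy.1, lt_trans hy.2 h1⟩)
            exact absurd (hαν.trans_le hle) (not_lt.mpr hσα.le)
        have hmain := coh_main sys C hC i ν'' hlim'' hlt''
        have hξlim : IsLimitPt (C (sys.g i ν'')) ξ :=
          isLimitPt_mono hξ (fun y hy => by
            rw [hmain]; exact ⟨lt_trans hy.2 hξν, hy.1⟩)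
        obtain ⟨j, hj1, hj2⟩ := IH ν'' hlt'' (sys.g i ν'') hnug ξ hξlim (by rw [hnug]; exact hξν)
        refine ⟨j, hj1, ?_⟩
        rw [hj2, hmain]
        ext x
        constructor
        · rintro ⟨h1, _, h3⟩; exact ⟨h1, h3⟩
        · rintro ⟨h1, h3⟩; exact ⟨h1, lt_trans h1 hξν, h3⟩
end
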